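/- Let t > 0 and let (h_k)_{k≥1} be an orthonormal basis of L²([0,t]), with c_k(s) = ∫_0^s h_k(τ) dτ. Then for all s, s' ∈ [0,t], Σ_{k=1}^∞ c_k(s) c_k(s') = min(s, s'). Consequently, if (ξ_k)_{k≥1} are independent standard Gaussian random variables and S(s) denotes the L² sum Σ_{k=1}^∞ ξ_k c_k(s), then E[S(s)S(s')] = min(s,s'), i.e., S has the covariance function of standard Brownian motion. -/

import Mathlib

open MeasureTheory ProbabilityTheory Filter Real
open scoped NNReal ENNReal

lemma my_exp_tendsto_top : Tendsto (fun x : ℝ => Real.exp (-x^2/2)) atTop (nhds 0) := by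
  apply Real.tendsto_exp_atBot.comp
  apply Tendsto.atBot_div_const (by norm_num)
  exact tendsto_neg_atBot_iff.mpr (tendsto_pow_atTop two_ne_zero)

lemma my_exp_tendsto_bot : Tendsto (fun x : ℝ => Real.exp (-x^2/2)) atBot (nhds 0) := by
  have := my_exp_tendsto_top.comp tendsto_neg_atBot_atTop
  simpa [Function.comp_def] using this

lemma my_deriv (x : ℝ) : HasDerivAt (fun y : ℝ => -Real.exp (-y^2/2)) (x * Real.exp (-x^2/2)) x := by
  have h1 : HasDerivAt (fun y : ℝ => -y^2/2) (-x) x := by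
    have := ((hasDerivAt_pow 2 x).neg.div_const 2)
    exact this.congr_deriv (by push_cast; ring)
  have := (h1.exp).neg
  exact this.congr_deriv (by ring)

lemma my_integrable : Integrable (fun x : ℝ => x * Real.exp (-x^2/2)) := by
  have := integrable_mul_exp_neg_mul_sq (b := 1/2) (by norm_num)
  convert this using 2 with x; ring_nf

lemma first_moment : ∫ x : ℝ, x * Real.exp (-x^2/2) = 0 := by
  have hIoi : ∫ x in Set.Ioi (0:ℝ), x * Real.exp (-x^2/2) = 0 - (-Real.exp (-(0:ℝ)^2/2)) := by
    apply integral_Ioi_of_hasDerivAt_of_tendsto (f := fun y => -Real.exp (-y^2/2))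
    · exact (my_deriv 0).continuousAt.continuousWithinAt
    · exact fun x _ => my_deriv x
    · exact my_integrable.integrableOn
    · simpa using my_exp_tendsto_top.neg
  have hIic : ∫ x in Set.Iic (0:ℝ), x * Real.exp (-x^2/2) = (-Real.exp (-(0:ℝ)^2/2)) - 0 := by
    apply integral_Iic_of_hasDerivAt_of_tendsto (f := fun y => -Real.exp (-y^2/2))
    · exact (my_deriv 0).continuousAt.continuousWithinAt
    · exact fun x _ => my_deriv x
    · exact my_integrable.integrableOn
    · simpa using my_exp_tendsto_bot.neg
  have := integral_add_compl (measurableSet_Iic (a := (0:ℝ))) my_integrable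
  rw [Set.compl_Iic] at this
  rw [← this, hIoi, hIic]; ring

lemma my_integrable_exp : Integrable (fun x : ℝ => Real.exp (-x^2/2)) := by
  have := integrable_exp_neg_mul_sq (b := 1/2) (by norm_num)
  convert this using 2 with x; ring_nf

lemma my_integrable_sq : Integrable (fun x : ℝ => x^2 * Real.exp (-x^2/2)) := by
  have := integrable_rpow_mul_exp_neg_mul_sq (b := 1/2) (by norm_num) (s := 2) (by norm_num)
  have heq : (fun x : ℝ => x^2 * Real.exp (-x^2/2)) = fun x : ℝ => x^2 * Real.exp (-(1/2) * x^2) := by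
    funext x; ring_nf
  rw [heq]
  have h2 : (fun x : ℝ => x ^ (2:ℝ) * Real.exp (-(1/2) * x^2)) = fun x : ℝ => x^2 * Real.exp (-(1/2) * x^2) := by
    funext x
    rw [show ((2:ℝ)) = ((2:ℕ):ℝ) by norm_num, Real.rpow_natCast]
  rwa [h2] at this

lemma my_tendsto_mul_top : Tendsto (fun x : ℝ => x * Real.exp (-x^2/2)) atTop (nhds 0) := by
  have h := rpow_mul_exp_neg_mul_sq_isLittleO_exp_neg (b := 1/2) (by norm_num) 1
  have h0 : Tendsto (fun x : ℝ => Real.exp (-(1/2) * x)) atTop (nhds 0) := by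
    apply Real.tendsto_exp_atBot.comp
    exact (tendsto_id (α := ℝ)).const_mul_atTop_of_neg (by norm_num)
  have h1 := h.trans_tendsto h0
  apply h1.congr
  intro x
  rw [Real.rpow_one]; ring_nf

lemma my_tendsto_mul_bot : Tendsto (fun x : ℝ => -x * Real.exp (-x^2/2)) atBot (nhds 0) := by
  have := my_tendsto_mul_top.comp tendsto_neg_atBot_atTop
  simpa [Function.comp_def] using this

lemma my_deriv2 (x : ℝ) : HasDerivAt (fun y : ℝ => -y * Real.exp (-y^2/2))
    (x^2 * Real.exp (-x^2/2) - Real.exp (-x^2/2)) x := by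
  have h1 : HasDerivAt (fun y : ℝ => -y^2/2) (-x) x := by
    have := ((hasDerivAt_pow 2 x).neg.div_const 2)
    exact this.congr_deriv (by push_cast; ring)
  have h2 := (hasDerivAt_id x).neg.mul h1.exp
  exact h2.congr_deriv (by simp only [Pi.neg_apply, id_eq]; ring)

lemma second_moment : ∫ x : ℝ, x^2 * Real.exp (-x^2/2) = Real.sqrt (2 * Real.pi) := by
  have hint : Integrable (fun x : ℝ => x^2 * Real.exp (-x^2/2) - Real.exp (-x^2/2)) :=
    my_integrable_sq.sub my_integrable_exp
  have hIoi : ∫ x in Set.Ioi (0:ℝ), (x^2 * Real.exp (-x^2/2) - Real.exp (-x^2/2))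
      = 0 - (-(0:ℝ) * Real.exp (-(0:ℝ)^2/2)) := by
    apply integral_Ioi_of_hasDerivAt_of_tendsto (f := fun y => -y * Real.exp (-y^2/2))
    · exact (my_deriv2 0).continuousAt.continuousWithinAt
    · exact fun x _ => my_deriv2 x
    · exact hint.integrableOn
    · have := my_tendsto_mul_top.neg
      simpa using this
  have hIic : ∫ x in Set.Iic (0:ℝ), (x^2 * Real.exp (-x^2/2) - Real.exp (-x^2/2))
      = (-(0:ℝ) * Real.exp (-(0:ℝ)^2/2)) - 0 := by
    apply integral_Iic_of_hasDerivAt_of_tendsto (f := fun y => -y * Real.exp (-y^2/2))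
    · exact (my_deriv2 0).continuousAt.continuousWithinAt
    · exact fun x _ => my_deriv2 x
    · exact hint.integrableOn
    · exact my_tendsto_mul_bot
  have hzero : ∫ x : ℝ, (x^2 * Real.exp (-x^2/2) - Real.exp (-x^2/2)) = 0 := by
    have := integral_add_compl (measurableSet_Iic (a := (0:ℝ))) hint
    rw [Set.compl_Iic] at this
    rw [← this, hIoi, hIic]; ring
  have hsplit := integral_sub my_integrable_sq my_integrable_exp
  rw [hsplit] at hzero
  have hexp : ∫ x : ℝ, Real.exp (-x^2/2) = Real.sqrt (2 * Real.pi) := by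
    have heq : (fun x : ℝ => Real.exp (-x^2/2)) = fun x : ℝ => Real.exp (-(1/2) * x^2) := by
      funext x; ring_nf
    rw [heq, integral_gaussian]
    congr 1
    rw [div_div_eq_mul_div, div_one, mul_comm]
  linarith

lemma pdf_eq (x : ℝ) : gaussianPDFReal 0 1 x = (Real.sqrt (2 * Real.pi))⁻¹ * Real.exp (-x^2/2) := by
  simp [gaussianPDFReal]

lemma gauss_eq : gaussianReal 0 1
    = volume.withDensity (fun x => ((gaussianPDFReal 0 1 x).toNNReal : ℝ≥0∞)) := by
  rw [gaussianReal_of_var_ne_zero 0 one_ne_zero]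
  rfl

lemma meas_nnpdf : Measurable (fun x => Real.toNNReal (gaussianPDFReal 0 1 x)) :=
  (measurable_gaussianPDFReal 0 1).real_toNNReal

lemma integral_gauss (g : ℝ → ℝ) :
    ∫ x, g x ∂(gaussianReal 0 1) = ∫ x, gaussianPDFReal 0 1 x * g x := by
  rw [gauss_eq, integral_withDensity_eq_integral_smul meas_nnpdf]
  congr 1; funext x
  simp [NNReal.smul_def, Real.coe_toNNReal _ (gaussianPDFReal_nonneg 0 1 x)]

lemma integrable_gauss_iff (g : ℝ → ℝ) :
    Integrable g (gaussianReal 0 1) ↔ Integrable (fun x => gaussianPDFReal 0 1 x * g x) volume := by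
  rw [gauss_eq, integrable_withDensity_iff_integrable_smul meas_nnpdf]
  constructor <;> intro h <;> refine h.congr (ae_of_all _ fun x => ?_) <;>
    simp [NNReal.smul_def, Real.coe_toNNReal _ (gaussianPDFReal_nonneg 0 1 x)]

lemma gauss_integrable_sq : Integrable (fun x : ℝ => x^2) (gaussianReal 0 1) := by
  rw [integrable_gauss_iff]
  have := my_integrable_sq.const_mul (Real.sqrt (2 * Real.pi))⁻¹
  refine this.congr (ae_of_all _ fun x => ?_)
  simp only [pdf_eq]; ring

lemma gauss_moment_one : ∫ x, x ∂(gaussianReal 0 1) = 0 := by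
  rw [integral_gauss]
  have : ∫ x : ℝ, gaussianPDFReal 0 1 x * x
      = (Real.sqrt (2 * Real.pi))⁻¹ * ∫ x : ℝ, x * Real.exp (-x^2/2) := by
    rw [← integral_const_mul]
    congr 1; funext x; rw [pdf_eq]; ring
  rw [this, first_moment, mul_zero]

lemma gauss_moment_two : ∫ x, x^2 ∂(gaussianReal 0 1) = 1 := by
  rw [integral_gauss]
  have : ∫ x : ℝ, gaussianPDFReal 0 1 x * x^2
      = (Real.sqrt (2 * Real.pi))⁻¹ * ∫ x : ℝ, x^2 * Real.exp (-x^2/2) := by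
    rw [← integral_const_mul]
    congr 1; funext x; rw [pdf_eq]; ring
  rw [this, second_moment, inv_mul_cancel₀]
  positivity

lemma gauss_memℒp_two : MemLp (fun x : ℝ => x) 2 (gaussianReal 0 1) := by
  have : MemLp (id : ℝ → ℝ) 2 (gaussianReal 0 1) := by
    rw [memLp_two_iff_integrable_sq aestronglyMeasurable_id]
    exact gauss_integrable_sq
  exact this

section Xi
variable {Ω : Type*} [MeasurableSpace Ω] {P : Measure Ω} [IsProbabilityMeasure P]

lemma xi_memℒp {X : Ω → ℝ} (hm : Measurable X) (hg : P.map X = gaussianReal 0 1) :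
    MemLp X 2 P := by
  have h := (memLp_map_measure_iff (μ := P) (g := (id : ℝ → ℝ)) (f := X) aestronglyMeasurable_id
    hm.aemeasurable (p := 2)).mp
  rw [hg] at h
  exact h gauss_memℒp_two

lemma xi_mean {X : Ω → ℝ} (hm : Measurable X) (hg : P.map X = gaussianReal 0 1) :
    ∫ ω, X ω ∂P = 0 := by
  have h := integral_map (μ := P) (φ := X) (f := (id : ℝ → ℝ)) hm.aemeasurable aestronglyMeasurable_id
  rw [hg] at h
  simpa using h.symm.trans gauss_moment_one

lemma xi_sq {X : Ω → ℝ} (hm : Measurable X) (hg : P.map X = gaussianReal 0 1) :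
    ∫ ω, X ω ^ 2 ∂P = 1 := by
  have h := integral_map (μ := P) (φ := X) (f := fun x : ℝ => x ^ 2) hm.aemeasurable
    (measurable_id.pow_const 2).aestronglyMeasurable
  rw [hg] at h
  simpa using h.symm.trans gauss_moment_two

lemma xi_mul_integrable {X Y : Ω → ℝ} (hX : MemLp X 2 P) (hY : MemLp Y 2 P) :
    Integrable (fun ω => X ω * Y ω) P := by
  have h := L2.integrable_inner (𝕜 := ℝ) (hX.toLp X) (hY.toLp Y)
  refine h.congr ?_
  filter_upwards [hX.coeFn_toLp, hY.coeFn_toLp] with ω h1 h2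
  simp [h1, h2, RCLike.inner_apply]; ring

end Xi

section Sum
variable {Ω : Type*} [MeasurableSpace Ω] {P : Measure Ω} [IsProbabilityMeasure P]

lemma sum_expectation (ξ : ℕ → Ω → ℝ) (hmeas : ∀ k, Measurable (ξ k))
    (hindep : iIndepFun ξ P)
    (hgauss : ∀ k, P.map (ξ k) = gaussianReal 0 1)
    (a b : ℕ → ℝ) (n : ℕ) :
    ∫ ω, (∑ k ∈ Finset.range n, ξ k ω * a k) * (∑ j ∈ Finset.range n, ξ j ω * b j) ∂P
      = ∑ k ∈ Finset.range n, a k * b k := by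
  have hL2 : ∀ k, MemLp (ξ k) 2 P := fun k => xi_memℒp (hmeas k) (hgauss k)
  have hint : ∀ k j, Integrable (fun ω => ξ k ω * ξ j ω) P := fun k j =>
    xi_mul_integrable (hL2 k) (hL2 j)
  have hcross : ∀ k j, ∫ ω, ξ k ω * ξ j ω ∂P = if k = j then 1 else 0 := by
    intro k j
    by_cases hkj : k = j
    · subst hkj
      simp only [if_pos rfl, ← pow_two]
      exact xi_sq (hmeas k) (hgauss k)
    · rw [if_neg hkj]
      have hind : IndepFun (ξ k) (ξ j) P := hindep.indepFun hkj
      have hIk : Integrable (ξ k) P := (hL2 k).integrable one_le_two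
      have hIj : Integrable (ξ j) P := (hL2 j).integrable one_le_two
      have := hind.integral_mul_eq_mul_integral hIk.aestronglyMeasurable hIj.aestronglyMeasurable
      calc ∫ ω, ξ k ω * ξ j ω ∂P = ∫ ω, (ξ k * ξ j) ω ∂P := rfl
        _ = 0 := by rw [this, xi_mean (hmeas k) (hgauss k), zero_mul]
  have hexpand : ∀ ω, (∑ k ∈ Finset.range n, ξ k ω * a k) * (∑ j ∈ Finset.range n, ξ j ω * b j)
      = ∑ k ∈ Finset.range n, ∑ j ∈ Finset.range n, (a k * b j) * (ξ k ω * ξ j ω) := by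
    intro ω
    rw [Finset.sum_mul_sum]
    exact Finset.sum_congr rfl fun k _ => Finset.sum_congr rfl fun j _ => by ring
  simp_rw [hexpand]
  rw [integral_finset_sum _ (fun k _ => integrable_finset_sum _
    (fun j _ => ((hint k j).const_mul _)))]
  refine Finset.sum_congr rfl fun k hk => ?_
  rw [integral_finset_sum _ (fun j _ => ((hint k j).const_mul _))]
  rw [Finset.sum_eq_single_of_mem k hk]
  · rw [integral_const_mul, hcross, if_pos rfl, mul_one]
  · intro j _ hjk
    rw [integral_const_mul, hcross, if_neg (Ne.symm hjk), mul_zero]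

end Sum

lemma parseval
    (t : ℝ) (h : ℕ → Lp ℝ 2 (volume.restrict (Set.Icc (0:ℝ) t)))
    (horth : Orthonormal ℝ h)
    (hbasis : (Submodule.span ℝ (Set.range h)).topologicalClosure = ⊤)
    (c : ℕ → ℝ → ℝ)
    (hc : ∀ k s, c k s = ∫ τ in (0:ℝ)..s, (h k : ℝ → ℝ) τ)
    (s : ℝ) (hs : s ∈ Set.Icc (0:ℝ) t) (s' : ℝ) (hs' : s' ∈ Set.Icc (0:ℝ) t) :
    HasSum (fun k => c k s * c k s') (min s s') := by
  let μ := volume.restrict (Set.Icc (0:ℝ) t)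
  let b : HilbertBasis ℕ ℝ (Lp ℝ 2 μ) := HilbertBasis.mk horth hbasis.ge
  have hb : ⇑b = h := HilbertBasis.coe_mk _ _
  have hμfin : ∀ r : ℝ, μ (Set.Icc 0 r) ≠ ⊤ := by
    intro r
    refine ne_of_lt (lt_of_le_of_lt (Measure.restrict_apply_le _ _) ?_)
    exact measure_Icc_lt_top
  let f : Lp ℝ 2 μ := indicatorConstLp 2 measurableSet_Icc (hμfin s) (1:ℝ)
  let f' : Lp ℝ 2 μ := indicatorConstLp 2 measurableSet_Icc (hμfin s') (1:ℝ)
  -- inner products with h k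
  have hinner : ∀ (r : ℝ), r ∈ Set.Icc (0:ℝ) t → ∀ (hμr : μ (Set.Icc 0 r) ≠ ⊤) (k : ℕ),
      inner ℝ (indicatorConstLp 2 measurableSet_Icc hμr (1:ℝ)) (h k) = c k r := by
    intro r hr hμr k
    rw [L2.inner_indicatorConstLp_one measurableSet_Icc hμr (h k)]
    rw [hc k r, intervalIntegral.integral_of_le hr.1]
    have hres : ∫ x in Set.Icc 0 r, (h k : ℝ → ℝ) x ∂μ
        = ∫ x in Set.Icc 0 r, (h k : ℝ → ℝ) x ∂volume := by
      show ∫ x in Set.Icc 0 r, (h k : ℝ → ℝ) x ∂(volume.restrict (Set.Icc (0:ℝ) t)) = _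
      rw [Measure.restrict_restrict measurableSet_Icc,
        Set.inter_eq_left.mpr (Set.Icc_subset_Icc_right hr.2)]
    rw [hres, integral_Icc_eq_integral_Ioc]
  -- inner product of the two indicators
  have hff' : inner (𝕜 := ℝ) f f' = min s s' := by
    rw [show f' = indicatorConstLp 2 measurableSet_Icc (hμfin s') (1:ℝ) from rfl]
    rw [real_inner_comm]
    rw [L2.inner_indicatorConstLp_one measurableSet_Icc (hμfin s') f]
    have hcoe : (f : ℝ → ℝ) =ᵐ[μ] Set.indicator (Set.Icc 0 s) (fun _ => (1:ℝ)) :=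
      indicatorConstLp_coeFn
    calc ∫ x in Set.Icc 0 s', (f : ℝ → ℝ) x ∂μ
        = ∫ x in Set.Icc 0 s', Set.indicator (Set.Icc 0 s) (fun _ => (1:ℝ)) x ∂μ :=
          integral_congr_ae (ae_restrict_of_ae hcoe)
      _ = ∫ x in Set.Icc 0 s' ∩ Set.Icc 0 s, (1:ℝ) ∂μ :=
          setIntegral_indicator measurableSet_Icc
      _ = (μ (Set.Icc 0 s' ∩ Set.Icc 0 s)).toReal := by rw [setIntegral_const, smul_eq_mul, mul_one]; rfl
      _ = min s s' := by
          rw [Set.Icc_inter_Icc, max_self]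
          have hμmin : μ (Set.Icc 0 (min s' s)) = ENNReal.ofReal (min s' s - 0) := by
            show (volume.restrict (Set.Icc (0:ℝ) t)) _ = _
            rw [Measure.restrict_apply measurableSet_Icc,
              Set.inter_eq_left.mpr (Set.Icc_subset_Icc_right
                (le_trans (min_le_left s' s) hs'.2)), Real.volume_Icc]
          rw [hμmin, ENNReal.toReal_ofReal (by simp [le_min_iff, hs.1, hs'.1]), min_comm s' s]
          ring
  have hpars := b.hasSum_inner_mul_inner f f'
  rw [hff'] at hpars
  have heq : (fun k => inner (𝕜 := ℝ) f (b k) * inner (𝕜 := ℝ) (b k) f')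
      = fun k => c k s * c k s' := by
    funext k
    have hbk : b k = h k := congrFun hb k
    rw [hbk, real_inner_comm f' (h k)]
    rw [hinner s hs (hμfin s) k, hinner s' hs' (hμfin s') k]
  rw [heq] at hpars
  exact hpars

/-- If `(h k)` is an orthonormal basis of `L²([0,t])` and `c k s = ∫_0^s h k`, then for
`s, s' ∈ [0,t]` one has `∑_k c k s * c k s' = min s s'`.  Consequently, if `(ξ k)` are
independent standard Gaussians and `Ss`, `Ss'` are the mean-square limits of the partial
sums of `∑ ξ k * c k s` and `∑ ξ k * c k s'`, then `E[Ss * Ss'] = min s s'`, i.e. the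
covariance function of standard Brownian motion. -/
theorem statement3
    (t : ℝ) (ht : 0 < t)
    (h : ℕ → Lp ℝ 2 (volume.restrict (Set.Icc (0:ℝ) t)))
    (horth : Orthonormal ℝ h)
    (hbasis : (Submodule.span ℝ (Set.range h)).topologicalClosure = ⊤)
    (c : ℕ → ℝ → ℝ)
    (hc : ∀ k s, c k s = ∫ τ in (0:ℝ)..s, (h k : ℝ → ℝ) τ)
    {Ω : Type*} [MeasurableSpace Ω] (P : Measure Ω) [IsProbabilityMeasure P]
    (ξ : ℕ → Ω → ℝ)
    (hmeas : ∀ k, Measurable (ξ k))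
    (hindep : iIndepFun ξ P)
    (hgauss : ∀ k, P.map (ξ k) = gaussianReal 0 1)
    (s : ℝ) (hs : s ∈ Set.Icc (0:ℝ) t) (s' : ℝ) (hs' : s' ∈ Set.Icc (0:ℝ) t)
    (Ss Ss' : Ω → ℝ) (hSs : MemLp Ss 2 P) (hSs' : MemLp Ss' 2 P)
    (hSlim : Tendsto (fun n => ∫ ω, (∑ k ∈ Finset.range n, ξ k ω * c k s - Ss ω) ^ 2 ∂P)
      atTop (nhds 0))
    (hSlim' : Tendsto (fun n => ∫ ω, (∑ k ∈ Finset.range n, ξ k ω * c k s' - Ss' ω) ^ 2 ∂P)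
      atTop (nhds 0)) :
    HasSum (fun k => c k s * c k s') (min s s') ∧
      ∫ ω, Ss ω * Ss' ω ∂P = min s s' := by
  have hsum := parseval t h horth hbasis c hc s hs s' hs'
  refine ⟨hsum, ?_⟩
  have hL2 : ∀ k, MemLp (ξ k) 2 P := fun k => xi_memℒp (hmeas k) (hgauss k)
  set Sn : ℕ → Ω → ℝ := fun n ω => ∑ k ∈ Finset.range n, ξ k ω * c k s with hSndef
  set Sn' : ℕ → Ω → ℝ := fun n ω => ∑ k ∈ Finset.range n, ξ k ω * c k s' with hSn'def
  have hSnmem : ∀ n, MemLp (Sn n) 2 P := by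
    intro n
    refine memLp_finset_sum _ (fun k _ => ?_)
    have heq : (fun ω => ξ k ω * c k s) = fun ω => c k s * ξ k ω := by funext ω; ring
    rw [heq]
    exact (hL2 k).const_mul (c k s)
  have hSnmem' : ∀ n, MemLp (Sn' n) 2 P := by
    intro n
    refine memLp_finset_sum _ (fun k _ => ?_)
    have heq : (fun ω => ξ k ω * c k s') = fun ω => c k s' * ξ k ω := by funext ω; ring
    rw [heq]
    exact (hL2 k).const_mul (c k s')
  set F : Lp ℝ 2 P := hSs.toLp Ss with hF
  set G : Lp ℝ 2 P := hSs'.toLp Ss' with hG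
  set fn : ℕ → Lp ℝ 2 P := fun n => (hSnmem n).toLp (Sn n) with hfn
  set gn : ℕ → Lp ℝ 2 P := fun n => (hSnmem' n).toLp (Sn' n) with hgn
  have hnorm : ∀ (q : Ω → ℝ) (hq : MemLp q 2 P) (r : Ω → ℝ) (hr : MemLp r 2 P),
      ‖hq.toLp q - hr.toLp r‖^2 = ∫ ω, (q ω - r ω)^2 ∂P := by
    intro q hq r hr
    rw [← real_inner_self_eq_norm_sq, L2.inner_def]
    refine integral_congr_ae ?_
    filter_upwards [Lp.coeFn_sub (hq.toLp q) (hr.toLp r), hq.coeFn_toLp, hr.coeFn_toLp]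
      with ω h1 h2 h3
    simp only [RCLike.inner_apply, conj_trivial, h1, Pi.sub_apply, h2, h3]
    ring
  have hFtend : Tendsto fn atTop (nhds F) := by
    rw [tendsto_iff_norm_sub_tendsto_zero]
    have h2 : Tendsto (fun n => ‖fn n - F‖^2) atTop (nhds 0) := by
      have : ∀ n, ‖fn n - F‖^2 = ∫ ω, (Sn n ω - Ss ω)^2 ∂P := fun n => hnorm _ (hSnmem n) _ hSs
      simp_rw [this]
      exact hSlim
    have h3 := (Real.continuous_sqrt.tendsto' 0 0 (by simp)).comp h2
    refine h3.congr fun n => ?_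
    simp [Real.sqrt_sq (norm_nonneg _)]
  have hGtend : Tendsto gn atTop (nhds G) := by
    rw [tendsto_iff_norm_sub_tendsto_zero]
    have h2 : Tendsto (fun n => ‖gn n - G‖^2) atTop (nhds 0) := by
      have : ∀ n, ‖gn n - G‖^2 = ∫ ω, (Sn' n ω - Ss' ω)^2 ∂P := fun n => hnorm _ (hSnmem' n) _ hSs'
      simp_rw [this]
      exact hSlim'
    have h3 := (Real.continuous_sqrt.tendsto' 0 0 (by simp)).comp h2
    refine h3.congr fun n => ?_
    simp [Real.sqrt_sq (norm_nonneg _)]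
  have hinner_tend : Tendsto (fun n => inner (𝕜 := ℝ) (fn n) (gn n)) atTop
      (nhds (inner (𝕜 := ℝ) F G)) := hFtend.inner hGtend
  have hval : ∀ n, inner (𝕜 := ℝ) (fn n) (gn n) = ∑ k ∈ Finset.range n, c k s * c k s' := by
    intro n
    rw [L2.inner_def]
    have : ∫ ω, inner (𝕜 := ℝ) ((fn n : Ω → ℝ) ω) ((gn n : Ω → ℝ) ω) ∂P
        = ∫ ω, Sn n ω * Sn' n ω ∂P := by
      refine integral_congr_ae ?_
      filter_upwards [(hSnmem n).coeFn_toLp, (hSnmem' n).coeFn_toLp] with ω h1 h2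
      simp only [RCLike.inner_apply, conj_trivial, hfn, hgn, h1, h2]; ring
    rw [this]
    exact sum_expectation ξ hmeas hindep hgauss (fun k => c k s) (fun k => c k s') n
  have hFG : inner (𝕜 := ℝ) F G = ∫ ω, Ss ω * Ss' ω ∂P := by
    rw [L2.inner_def]
    refine integral_congr_ae ?_
    filter_upwards [hSs.coeFn_toLp, hSs'.coeFn_toLp] with ω h1 h2
    simp only [RCLike.inner_apply, conj_trivial, hF, hG, h1, h2]; ring
  have h1 : Tendsto (fun n => ∑ k ∈ Finset.range n, c k s * c k s') atTop
      (nhds (∫ ω, Ss ω * Ss' ω ∂P)) := by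
    simp_rw [← hval]
    rw [← hFG]
    exact hinner_tend
  exact tendsto_nhds_unique h1 hsum.tendsto_sum_nat
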